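/- arXiv:1811.03057 — 2 statements merged into one kernel-verified Lean document; each statement's English description precedes it below -/
import Mathlib

section
/- Let G be a finite p-group with |Z(G)| = p. Then the quotient Z₂(G)/Z(G) is elementary abelian, where Z₂(G) is the second center of G (i.e., Z₂(G)/Z(G) = Z(G/Z(G))). -/
theorem stmt10 (p : ℕ) [Fact p.Prime] (G : Type) [Group G] [Fintype G]
    (hG : IsPGroup p G) (hZ : Nat.card (Subgroup.center G) = p) :
    (∀ a b : Subgroup.center (G ⧸ Subgroup.center G), a * b = b * a) ∧
      ∀ a : Subgroup.center (G ⧸ Subgroup.center G), a ^ p = 1 := by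
  constructor
  · intro a b; exact Subtype.ext (Subgroup.mem_center_iff.mp b.2 a)
  · intro x
    obtain ⟨a, ha⟩ := QuotientGroup.mk_surjective (x : G ⧸ Subgroup.center G)
    have hx : (↑x : G ⧸ Subgroup.center G) ∈ Subgroup.center _ := x.2
    rw [← ha] at hx
    have key : a ^ p ∈ Subgroup.center G := by
      rw [Subgroup.mem_center_iff]
      intro g
      set c := a⁻¹ * (g * a * g⁻¹) with hc
      have hcZ : c ∈ Subgroup.center G := by
        have hcomm : (QuotientGroup.mk g : G ⧸ Subgroup.center G) * QuotientGroup.mk a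
            = QuotientGroup.mk a * QuotientGroup.mk g :=
          Subgroup.mem_center_iff.mp hx (QuotientGroup.mk g)
        rw [← QuotientGroup.eq_one_iff]
        show ((QuotientGroup.mk c : G ⧸ Subgroup.center G)) = 1
        simp only [hc, QuotientGroup.mk_mul, QuotientGroup.mk_inv]
        rw [hcomm]
        group
      have hcp : c ^ p = 1 := by
        have h1 : (⟨c, hcZ⟩ : Subgroup.center G) ^ p = 1 := by
          rw [← hZ]; exact pow_card_eq_one'
        have := congrArg (Subtype.val) h1
        simpa using this
      have hconj : g * a * g⁻¹ = a * c := by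
        rw [hc]; group
      have hcomm_ac : Commute a c := (Subgroup.mem_center_iff.mp hcZ a)
      calc g * a ^ p = (g * a * g⁻¹) ^ p * g := by rw [conj_pow]; group
        _ = (a * c) ^ p * g := by rw [hconj]
        _ = (a ^ p * c ^ p) * g := by rw [hcomm_ac.mul_pow]
        _ = a ^ p * g := by rw [hcp, mul_one]
    ext
    show ((x : G ⧸ Subgroup.center G)) ^ p = 1
    rw [← ha, ← QuotientGroup.mk_pow, QuotientGroup.eq_one_iff]
    exact key
end

section
/- Let G be a semi-extraspecial p-group of order p⁶, i.e., G' = Z(G), |G'| = p², G/G' is elementary abelian, and every nonlinear irreducible character of G has degree p². Then p² ∉ cod(G). -/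
open CategoryTheory

/-- The degree of (the character of) a finite-dimensional complex representation. -/
noncomputable def charDeg {G : Type} [Group G] (V : FDRep ℂ G) : ℕ :=
  Module.finrank ℂ V

/-- The kernel of (the character of) a representation. -/
noncomputable def charKer {G : Type} [Group G] (V : FDRep ℂ G) : Subgroup G :=
  MonoidHom.ker (Representation.asGroupHom V.ρ)

/-- The codegree of an irreducible character: `|G : ker χ| / χ(1)`. -/
noncomputable def cod {G : Type} [Group G] (V : FDRep ℂ G) : ℕ :=
  (charKer V).index / charDeg V

/-- The set of codegrees of irreducible characters of `G`. -/
noncomputable def codSet (G : Type) [Group G] : Set ℕ :=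
  {n | ∃ V : FDRep ℂ G, Simple V ∧ cod V = n}

open Module Polynomial

lemma trace_conj_aux {V : Type} [AddCommGroup V] [Module ℂ V] [FiniteDimensional ℂ V]
    (f g : Module.End ℂ V) (hfg : f * g = 1) (hgf : g * f = 1)
    (m : ℕ) (hm : 0 < m) (hfm : f ^ m = 1) :
    LinearMap.trace ℂ V g = (starRingEnd ℂ) (LinearMap.trace ℂ V f) := by
  classical
  have hcomm : Commute f g := hfg.trans hgf.symm
  have hss : f.IsSemisimple := by
    apply Module.End.isSemisimple_of_squarefree_aeval_eq_zero
      (p := (X : ℂ[X]) ^ m - C 1)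
    · exact (Polynomial.separable_X_pow_sub_C (1 : ℂ)
        (by exact_mod_cast hm.ne') one_ne_zero).squarefree
    · simp [hfm]
  set N : ℂ → Submodule ℂ V := f.maxGenEigenspace with hN
  have hNeig : ∀ μ, N μ = f.eigenspace μ := fun μ =>
    hss.isFinitelySemisimple.maxGenEigenspace_eq_eigenspace μ
  have hint : DirectSum.IsInternal N :=
    DirectSum.isInternal_submodule_of_iSupIndep_of_iSup_eq_top
      f.independent_maxGenEigenspace f.iSup_maxGenEigenspace_eq_top
  have hfin : {μ | N μ ≠ ⊥}.Finite :=
    WellFoundedGT.finite_ne_bot_of_iSupIndep f.independent_maxGenEigenspace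
  have hmf : ∀ μ, Set.MapsTo f (N μ) (N μ) := fun μ =>
    f.mapsTo_maxGenEigenspace_of_comm rfl μ
  have hmg : ∀ μ, Set.MapsTo g (N μ) (N μ) := fun μ =>
    f.mapsTo_maxGenEigenspace_of_comm hcomm μ
  rw [LinearMap.trace_eq_sum_trace_restrict' hint hfin hmg,
      LinearMap.trace_eq_sum_trace_restrict' hint hfin hmf, map_sum]
  refine Finset.sum_congr rfl fun μ hμ => ?_
  have hμbot : N μ ≠ ⊥ := (Set.Finite.mem_toFinset hfin).mp hμ
  obtain ⟨x, hx, hx0⟩ := Submodule.exists_mem_ne_zero_of_ne_bot hμbot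
  have hxe : x ∈ f.eigenspace μ := hNeig μ ▸ hx
  have hev : f x = μ • x := Module.End.mem_eigenspace_iff.mp hxe
  have hμm : μ ^ m = 1 := by
    have h1 : (f ^ m) x = μ ^ m • x :=
      Module.End.HasEigenvector.pow_apply ⟨hxe, hx0⟩ m
    rw [hfm] at h1
    have : (μ ^ m - 1) • x = 0 := by
      rw [sub_smul, one_smul, ← h1]; simp
    rcases smul_eq_zero.mp this with h | h
    · exact sub_eq_zero.mp h
    · exact absurd h hx0
  have hμ0 : μ ≠ 0 := by
    intro h; rw [h, zero_pow hm.ne'] at hμm; exact zero_ne_one hμm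
  have hrf : f.restrict (hmf μ) = μ • (LinearMap.id : Module.End ℂ (N μ)) := by
    ext y
    have hy : f y = μ • (y : V) :=
      Module.End.mem_eigenspace_iff.mp (hNeig μ ▸ y.2)
    simp [LinearMap.restrict_apply, LinearMap.restrict_coe_apply, hy]
    exact hy
  have hrg : g.restrict (hmg μ) = μ⁻¹ • (LinearMap.id : Module.End ℂ (N μ)) := by
    ext y
    have hy : f y = μ • (y : V) :=
      Module.End.mem_eigenspace_iff.mp (hNeig μ ▸ y.2)
    have hgy : g (y : V) = μ⁻¹ • (y : V) := by
      have h1 : g (f (y : V)) = (y : V) := by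
        have := LinearMap.congr_fun hgf (y : V)
        simpa [Module.End.mul_apply] using this
      have h2 : μ • g (y : V) = (y : V) := by
        rw [← map_smul, ← hy, h1]
      rw [eq_comm, inv_smul_eq_iff₀ hμ0]
      exact h2.symm
    simp [LinearMap.restrict_apply, LinearMap.restrict_coe_apply, hgy]
    exact hgy
  rw [hrf, hrg, map_smul, map_smul, LinearMap.trace_id]
  have habs : ‖μ‖ = 1 := Complex.norm_eq_one_of_pow_eq_one hμm hm.ne'
  rw [smul_eq_mul, smul_eq_mul, map_mul, ← RCLike.inv_eq_conj habs]
  congr 1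
  simp

lemma char_inv_eq_conj {G : Type} [Group G] [Fintype G] (V : FDRep ℂ G) (g : G) :
    V.character g⁻¹ = (starRingEnd ℂ) (V.character g) := by
  have h1 : V.ρ g * V.ρ g⁻¹ = 1 := by rw [← map_mul, mul_inv_cancel, map_one]
  have h2 : V.ρ g⁻¹ * V.ρ g = 1 := by rw [← map_mul, inv_mul_cancel, map_one]
  exact trace_conj_aux (V.ρ g) (V.ρ g⁻¹) h1 h2 (Fintype.card G) Fintype.card_pos
    (by rw [← map_pow, pow_card_eq_one, map_one])

lemma rho_eq_one_of_mem_ker {G : Type} [Group G] (V : FDRep ℂ G) {g : G}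
    (hg : g ∈ charKer V) : V.ρ g = 1 := by
  have h : Representation.asGroupHom V.ρ g = 1 := hg
  have := congrArg Units.val h
  simpa [Representation.asGroupHom_apply] using this

lemma char_of_mem_ker {G : Type} [Group G] (V : FDRep ℂ G) {g : G}
    (hg : g ∈ charKer V) : V.character g = (Module.finrank ℂ V : ℂ) := by
  have h := rho_eq_one_of_mem_ker V hg
  show LinearMap.trace ℂ V (V.ρ g) = _
  rw [h, LinearMap.trace_one]

lemma sum_char_mul_self {G : Type} [Group G] [Fintype G] (V : FDRep ℂ G) (hV : Simple V) :
    ∑ g : G, V.character g * V.character g⁻¹ = (Fintype.card G : ℂ) := by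
  classical
  haveI := hV
  have h := FDRep.char_orthonormal (k := ℂ) (G := G) V V
  rw [if_pos ⟨Iso.refl V⟩, Nat.card_eq_fintype_card,
    inv_mul_eq_iff_eq_mul₀ (Nat.cast_ne_zero.mpr Fintype.card_ne_zero)] at h
  simpa using h

lemma finrank_ne_zero_of_simple {G : Type} [Group G] [Fintype G] (V : FDRep ℂ G)
    (hV : Simple V) : Module.finrank ℂ V ≠ 0 := by
  intro h
  haveI : Subsingleton V := Module.finrank_zero_iff.mp h
  have hchar : ∀ x : G, V.character x = 0 := by
    intro x
    show LinearMap.trace ℂ V (V.ρ x) = 0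
    rw [Subsingleton.elim (V.ρ x) 0, map_zero]
  have := sum_char_mul_self V hV
  rw [Finset.sum_congr rfl (fun g _ => by rw [hchar g, zero_mul])] at this
  simp only [Finset.sum_const_zero] at this
  exact Nat.cast_ne_zero.mpr Fintype.card_ne_zero this.symm

lemma linear_case {G : Type} [Group G] [Fintype G] (p : ℕ)
    (helem : ∀ x : G ⧸ commutator G, x ^ p = 1)
    (V : FDRep ℂ G) (hd1 : Module.finrank ℂ V = 1) : (charKer V).index ∣ p := by
  classical
  let b : Basis (Fin 1) ℂ V := Module.basisUnique (Fin 1) hd1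
  let e := LinearMap.toMatrixAlgEquiv b
  have hmul : ∀ A B : Matrix (Fin 1) (Fin 1) ℂ, (A * B) 0 0 = A 0 0 * B 0 0 := by
    intro A B
    rw [Matrix.mul_apply, Fin.sum_univ_one]
  let φ : G →* ℂ :=
    { toFun := fun g => e (V.ρ g) 0 0
      map_one' := by simp [e]
      map_mul' := by
        intro g h
        simp only [map_mul, e]
        rw [hmul] }
  have hkerφ : φ.ker = charKer V := by
    ext g
    simp only [MonoidHom.mem_ker, charKer]
    constructor
    · intro hg
      have h1 : e (V.ρ g) = 1 := by
        ext i j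
        rw [Subsingleton.elim i 0, Subsingleton.elim j 0]
        rw [Matrix.one_apply_eq]; exact hg
      have h2 : V.ρ g = 1 := by
        apply e.injective
        rw [h1, map_one]
      apply Units.ext
      simpa [Representation.asGroupHom_apply] using h2
    · intro hg
      have h2 : V.ρ g = 1 := by
        have := congrArg Units.val hg
        simpa [Representation.asGroupHom_apply] using this
      show e (V.ρ g) 0 0 = 1
      rw [h2, map_one, Matrix.one_apply_eq]
  let ψ := φ.toHomUnits
  have hkerψ : ψ.ker = charKer V := by
    rw [← hkerφ]
    ext g
    simp only [MonoidHom.mem_ker]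
    rw [Units.ext_iff, MonoidHom.coe_toHomUnits]
    rfl
  haveI : Finite ψ.range := Set.Finite.to_subtype (Set.finite_range ψ)
  have hexp : ∀ x : ψ.range, x ^ p = 1 := by
    rintro ⟨x, g, rfl⟩
    have hgp : g ^ p ∈ commutator G := by
      rw [← QuotientGroup.eq_one_iff]
      simpa using helem (g : G ⧸ commutator G)
    have : ψ (g ^ p) = 1 := Abelianization.commutator_subset_ker ψ hgp
    ext
    simpa [← map_pow] using congrArg Units.val this
  obtain ⟨y, hy⟩ := IsCyclic.exists_generator (α := ψ.range)
  have hcard : Nat.card ψ.range = orderOf y := (orderOf_eq_card_of_forall_mem_zpowers hy).symm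
  have hdvd : orderOf y ∣ p := orderOf_dvd_of_pow_eq_one (hexp y)
  rw [← hkerψ, Subgroup.index_ker, hcard]
  exact hdvd

theorem stmt19 (p : ℕ) [Fact p.Prime] (G : Type) [Group G] [Fintype G]
    (hG : IsPGroup p G) (hcard : Nat.card G = p ^ 6)
    (hZ : commutator G = Subgroup.center G)
    (hZcard : Nat.card (commutator G) = p ^ 2)
    (helem : ∀ x : G ⧸ commutator G, x ^ p = 1)
    (hdeg : ∀ V : FDRep ℂ G, Simple V → 1 < charDeg V → charDeg V = p ^ 2) :
    p ^ 2 ∉ codSet G := by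
  rintro ⟨V, hV, hcod⟩
  classical
  haveI := hV
  have hp : p.Prime := Fact.out
  have hp1 : 1 < p := hp.one_lt
  have hcardG : Fintype.card G = p ^ 6 := by rw [← Nat.card_eq_fintype_card, hcard]
  have hd0 : charDeg V ≠ 0 := finrank_ne_zero_of_simple V hV
  unfold cod at hcod
  by_cases hd1 : charDeg V = 1
  · have hdvd : (charKer V).index ∣ p := linear_case p helem V hd1
    rw [hd1, Nat.div_one] at hcod
    rw [hcod] at hdvd
    have h1 := Nat.le_of_dvd hp.pos hdvd
    nlinarith
  · have hd : charDeg V = p ^ 2 := hdeg V hV (by omega)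
    set K := charKer V with hK
    have hidx_dvd : K.index ∣ p ^ 6 := by
      rw [← hcard]
      exact ⟨Nat.card K, by rw [mul_comm]; exact (Subgroup.card_mul_index K).symm⟩
    obtain ⟨k, hk6, hkeq⟩ := (Nat.dvd_prime_pow hp).mp hidx_dvd
    rw [hd, hkeq] at hcod
    have hk2 : 2 ≤ k := by
      by_contra hlt
      push_neg at hlt
      have hlt2 : p ^ k < p ^ 2 := Nat.pow_lt_pow_right hp1 (by omega)
      rw [Nat.div_eq_of_lt hlt2] at hcod
      have : 0 < p ^ 2 := pow_pos hp.pos 2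
      omega
    have hpk : p ^ (k - 2) = p ^ 2 := by
      rw [← Nat.pow_div hk2 hp.pos, hcod]
    have hk4 : k = 4 := by
      have := Nat.pow_right_injective hp.two_le hpk
      omega
    have hindex : K.index = p ^ 4 := by rw [hkeq, hk4]
    have hcardK : Nat.card K = p ^ 2 := by
      have h1 : Nat.card K * K.index = Nat.card G := Subgroup.card_mul_index K
      rw [hindex, hcard] at h1
      have h2 : p ^ 2 * p ^ 4 = p ^ 6 := by ring
      exact Nat.eq_of_mul_eq_mul_right (pow_pos hp.pos 4) (h1.trans h2.symm)
    have hker_char : ∀ g ∈ K, V.character g = ((p ^ 2 : ℕ) : ℂ) := by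
      intro g hg
      rw [char_of_mem_ker V hg]
      norm_cast
    have hsum := sum_char_mul_self V hV
    rw [hcardG] at hsum
    have hsum2 : ∑ g : G, (Complex.normSq (V.character g) : ℂ) = ((p ^ 6 : ℕ) : ℂ) := by
      rw [← hsum]
      refine Finset.sum_congr rfl fun g _ => ?_
      rw [char_inv_eq_conj V g, Complex.mul_conj]
    have hsum3 : ∑ g : G, Complex.normSq (V.character g) = ((p ^ 6 : ℕ) : ℝ) := by
      apply Complex.ofReal_injective
      push_cast at hsum2 ⊢
      exact hsum2
    set s : Finset G := Finset.univ.filter (· ∈ K) with hs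
    have hscard : s.card = p ^ 2 := by
      rw [hs, ← Fintype.card_subtype, ← Nat.card_eq_fintype_card]
      exact hcardK
    have hsumK : ∑ g ∈ s, Complex.normSq (V.character g) = ((p ^ 6 : ℕ) : ℝ) := by
      have h1 : ∀ g ∈ s, Complex.normSq (V.character g) = ((p ^ 4 : ℕ) : ℝ) := by
        intro g hg
        rw [hker_char g (by simpa [hs] using hg)]
        rw [Complex.normSq_natCast]
        norm_cast
        ring
      rw [Finset.sum_congr rfl h1, Finset.sum_const, hscard, nsmul_eq_mul]
      norm_cast
      ring
    have hsplit := Finset.sum_filter_add_sum_filter_not Finset.univ (· ∈ K)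
        (fun g => Complex.normSq (V.character g))
    have hrest : ∑ g ∈ Finset.univ.filter (fun g => ¬ g ∈ K),
        Complex.normSq (V.character g) = 0 := by
      have h2 : ∑ g : G, Complex.normSq (V.character g) = ((p ^ 6 : ℕ) : ℝ) := hsum3
      rw [← hsplit] at h2
      rw [← hs] at h2
      rw [hsumK] at h2
      linarith
    have hvanish : ∀ g : G, g ∉ K → V.character g = 0 := by
      intro g hg
      have h0 := (Finset.sum_eq_zero_iff_of_nonneg
        (fun i _ => Complex.normSq_nonneg _)).mp hrest g (by simp [hg])
      exact Complex.normSq_eq_zero.mp h0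
    have hsumchar : ∑ g : G, V.character g = ((p ^ 4 : ℕ) : ℂ) := by
      rw [← Finset.sum_filter_add_sum_filter_not Finset.univ (· ∈ K) (fun g => V.character g)]
      have h1 : ∑ g ∈ s, V.character g = (p ^ 2) • ((p ^ 2 : ℕ) : ℂ) := by
        rw [Finset.sum_congr rfl (fun g hg => hker_char g (by simpa [hs] using hg)),
          Finset.sum_const, hscard]
      have h2 : ∑ g ∈ Finset.univ.filter (fun g => ¬ g ∈ K), V.character g = 0 :=
        Finset.sum_eq_zero (fun g hg => hvanish g (by simpa using hg))
      rw [← hs, h1, h2, add_zero, nsmul_eq_mul]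
      push_cast
      ring
    letI : Invertible ((Fintype.card G : ℂ)) :=
      invertibleOfNonzero (Nat.cast_ne_zero.mpr Fintype.card_ne_zero)
    have havg := FDRep.average_char_eq_finrank_invariants V
    have h3 := congrArg (fun z : ℂ => (Fintype.card G : ℂ) • z) havg
    beta_reduce at h3
    rw [smul_eq_mul (Fintype.card G : ℂ) (_ * _), Nat.card_eq_fintype_card, ← mul_assoc,
      mul_inv_cancel₀ (Nat.cast_ne_zero.mpr Fintype.card_ne_zero), one_mul] at h3
    rw [hsumchar, hcardG] at h3
    set c : ℕ := finrank ℂ (Representation.invariants V.ρ) with hc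
    have hnat : (p ^ 4 : ℕ) = p ^ 6 * c := by
      have : ((p ^ 4 : ℕ) : ℂ) = ((p ^ 6 * c : ℕ) : ℂ) := by
        rw [h3, smul_eq_mul]; push_cast; ring
      exact_mod_cast this
    rcases Nat.eq_zero_or_pos c with h0 | hpos
    · rw [h0, mul_zero] at hnat
      exact (pow_pos hp.pos 4).ne' hnat
    · have h5 : p ^ 6 ≤ p ^ 4 := hnat ▸ Nat.le_mul_of_pos_right _ hpos
      have h6 : p ^ 4 < p ^ 6 := Nat.pow_lt_pow_right hp1 (by omega)
      omega
end
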